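/- Let u be a positive harmonic function on the open disc B(a, d) and suppose u(z₁) = 0 for some z₁ ∈ ∂B(a,d), where u extends continuously to z₁ and is differentiable at z₁ with |∇u(z₁)| ≤ L. Then u(a) ≤ 2dL. -/

import Mathlib

open Metric Set Complex Filter

/-- `u` is harmonic on the open set `V ⊆ ℂ`: it is `C²` and its Laplacian
(the sum of the second derivatives in the directions `1` and `i`) vanishes. -/
def IsHarmonicOn (u : ℂ → ℝ) (V : Set ℂ) : Prop :=
  ∀ z ∈ V, ContDiffAt ℝ 2 u z ∧
    iteratedFDeriv ℝ 2 u z ![1, 1] + iteratedFDeriv ℝ 2 u z ![Complex.I, Complex.I] = 0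

lemma grad_holo {u : ℂ → ℝ} {a : ℂ} {d : ℝ} (hu : IsHarmonicOn u (Metric.ball a d)) :
    DifferentiableOn ℂ (fun z => ((fderiv ℝ u z 1 : ℝ) : ℂ) - ((fderiv ℝ u z I : ℝ) : ℂ) * I)
      (Metric.ball a d) := by
  intro z hz
  obtain ⟨hC2, hharm⟩ := hu z hz
  -- second derivative
  have hC1 : ContDiffAt ℝ 1 (fderiv ℝ u) z := hC2.fderiv_right (le_refl 2)
  have hf'' : HasFDerivAt (fderiv ℝ u) (fderiv ℝ (fderiv ℝ u) z) z :=
    (hC1.differentiableAt one_ne_zero).hasFDerivAt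
  set f'' := fderiv ℝ (fderiv ℝ u) z with hf''def
  have hev : ∀ᶠ y in nhds z, HasFDerivAt u (fderiv ℝ u y) y := by
    filter_upwards [hC2.eventually (by norm_num)] with y hy
    exact (hy.differentiableAt (by norm_num)).hasFDerivAt
  have hsymm : ∀ v w : ℂ, f'' v w = f'' w v := by
    intro v w
    exact second_derivative_symmetric_of_eventually hev hf'' v w
  have hharm' : f'' 1 1 + f'' I I = 0 := by
    rw [iteratedFDeriv_two_apply, iteratedFDeriv_two_apply] at hharm
    simpa using hharm
  -- derivative of P and Q
  have hP : HasFDerivAt (fun w => fderiv ℝ u w 1)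
      ((ContinuousLinearMap.apply ℝ ℝ (1 : ℂ)).comp f'') z :=
    (ContinuousLinearMap.apply ℝ ℝ (1 : ℂ)).hasFDerivAt.comp z hf''
  have hQ : HasFDerivAt (fun w => fderiv ℝ u w I)
      ((ContinuousLinearMap.apply ℝ ℝ I).comp f'') z :=
    (ContinuousLinearMap.apply ℝ ℝ I).hasFDerivAt.comp z hf''
  have hg1 : HasFDerivAt (fun w => ((fderiv ℝ u w 1 : ℝ) : ℂ))
      (Complex.ofRealCLM.comp ((ContinuousLinearMap.apply ℝ ℝ (1 : ℂ)).comp f'')) z :=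
    Complex.ofRealCLM.hasFDerivAt.comp z hP
  have hg2 : HasFDerivAt (fun w => ((fderiv ℝ u w I : ℝ) : ℂ))
      (Complex.ofRealCLM.comp ((ContinuousLinearMap.apply ℝ ℝ I).comp f'')) z :=
    Complex.ofRealCLM.hasFDerivAt.comp z hQ
  set Lr := (Complex.ofRealCLM.comp ((ContinuousLinearMap.apply ℝ ℝ (1 : ℂ)).comp f'')) -
      I • (Complex.ofRealCLM.comp ((ContinuousLinearMap.apply ℝ ℝ I).comp f'')) with hLr
  have hgz : HasFDerivAt
      (fun w => ((fderiv ℝ u w 1 : ℝ) : ℂ) - ((fderiv ℝ u w I : ℝ) : ℂ) * I) Lr z :=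
    hg1.sub (hg2.mul_const I)
  have hLr1 : Lr 1 = (f'' 1 1 : ℝ) - I * (f'' 1 I : ℝ) := by
    simp [hLr]
  have hLrI : Lr I = (f'' I 1 : ℝ) - I * (f'' I I : ℝ) := by
    simp [hLr]
  -- Cauchy-Riemann
  have hCR : Lr I = I * Lr 1 := by
    rw [hLr1, hLrI, hsymm I 1]
    have h2 : f'' I I = -f'' 1 1 := by linarith
    rw [h2]
    push_cast
    rw [show I * (((f'' 1 1:ℝ):ℂ) - I * ((f'' 1 I : ℝ):ℂ))
        = I * ((f'' 1 1:ℝ):ℂ) - I^2 * ((f'' 1 I : ℝ):ℂ) by ring, Complex.I_sq]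
    ring
  -- complex differentiability
  have hM : (ContinuousLinearMap.smulRight (1 : ℂ →L[ℂ] ℂ) (Lr 1)).restrictScalars ℝ = Lr := by
    apply ContinuousLinearMap.ext
    intro w
    have hw : w = (w.re : ℝ) • (1 : ℂ) + (w.im : ℝ) • I := by
      simp [Complex.real_smul]
    have hLHS : (ContinuousLinearMap.restrictScalars ℝ
        (ContinuousLinearMap.smulRight (1 : ℂ →L[ℂ] ℂ) (Lr 1))) w = w * Lr 1 := by
      simp
    rw [hLHS, hw, map_add, map_smul, map_smul, hCR]
    simp only [Complex.real_smul, smul_eq_mul]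
    ring
  have : HasFDerivAt (fun w => ((fderiv ℝ u w 1 : ℝ) : ℂ) - ((fderiv ℝ u w I : ℝ) : ℂ) * I)
      (ContinuousLinearMap.smulRight (1 : ℂ →L[ℂ] ℂ) (Lr 1)) z :=
    hasFDerivAt_of_restrictScalars ℝ hgz hM
  exact this.differentiableAt.differentiableWithinAt

lemma exists_primitive {g : ℂ → ℂ} {a : ℂ} {d : ℝ} (hd : 0 < d)
    (hg : DifferentiableOn ℂ g (Metric.ball a d)) :
    ∃ F : ℂ → ℂ, F a = 0 ∧ ∀ z ∈ Metric.ball a d, HasDerivAt F (g z) z := by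
  have hball : ∀ r : NNReal, 0 < r → (r : ℝ) < d →
      HasFPowerSeriesOnBall g (cauchyPowerSeries g a r) a r := fun r hr0 hrd =>
    (hg.mono (closedBall_subset_ball hrd)).hasFPowerSeriesOnBall hr0
  set p := cauchyPowerSeries g a ((d / 2).toNNReal) with hpdef
  have hhalf : HasFPowerSeriesOnBall g p a ((d / 2).toNNReal) :=
    hball _ (Real.toNNReal_pos.2 (by linarith)) (by
      rw [Real.coe_toNNReal _ (by linarith)]; linarith)
  have hp : ∀ r : NNReal, 0 < r → (r : ℝ) < d → HasFPowerSeriesOnBall g p a r := by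
    intro r hr0 hrd
    have h1 := hball r hr0 hrd
    rwa [h1.hasFPowerSeriesAt.eq_formalMultilinearSeries hhalf.hasFPowerSeriesAt] at h1
  refine ⟨fun z => ∑' n, (p.coeff n / (n + 1)) * (z - a) ^ (n + 1), by simp, ?_⟩
  intro z hz
  obtain ⟨ρ, hρ1, hρ2⟩ := exists_between (mem_ball.1 hz)
  obtain ⟨ρ', hρ'1, hρ'2⟩ := exists_between hρ2
  have hρ0 : 0 < ρ := lt_of_le_of_lt dist_nonneg hρ1
  have hρ'0 : 0 < ρ' := hρ0.trans hρ'1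
  have hps' : HasFPowerSeriesOnBall g p a (ρ'.toNNReal) :=
    hp _ (Real.toNNReal_pos.2 hρ'0) (by rw [Real.coe_toNNReal _ hρ'0.le]; exact hρ'2)
  have hrad : (ρ'.toNNReal : ENNReal) ≤ p.radius := hps'.r_le
  have hsum : Summable fun n => ‖p.coeff n‖ * ρ ^ n := by
    have hlt : (ρ.toNNReal : ENNReal) < p.radius := by
      refine lt_of_lt_of_le ?_ hrad
      rw [ENNReal.coe_lt_coe, ← NNReal.coe_lt_coe, Real.coe_toNNReal _ hρ0.le,
        Real.coe_toNNReal _ hρ'0.le]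
      exact hρ'1
    have := p.summable_norm_mul_pow hlt
    simpa [Real.coe_toNNReal _ hρ0.le, FormalMultilinearSeries.norm_apply_eq_norm_coef] using this
  have key := hasDerivAt_tsum_of_isPreconnected (u := fun n => ‖p.coeff n‖ * ρ ^ n)
      (g := fun n w => (p.coeff n / (n + 1)) * (w - a) ^ (n + 1))
      (g' := fun n w => p.coeff n * (w - a) ^ n)
      hsum Metric.isOpen_ball (convex_ball a ρ).isPreconnected
      (fun n y hy => ?_) (fun n y hy => ?_) (mem_ball_self hρ0) ?_ (mem_ball.2 hρ1)
  · have hmem : z - a ∈ Metric.eball (0 : ℂ) (ρ'.toNNReal) := by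
      rw [EMetric.mem_ball, edist_zero_right]
      refine ENNReal.coe_lt_coe.2 ?_
      rw [← NNReal.coe_lt_coe, coe_nnnorm, Real.coe_toNNReal _ hρ'0.le, ← dist_eq_norm]
      exact hρ1.trans hρ'1
    have hsumz : HasSum (fun n => p.coeff n * (z - a) ^ n) (g z) := by
      have := hps'.hasSum hmem
      simpa [FormalMultilinearSeries.apply_eq_pow_smul_coeff, smul_eq_mul, mul_comm,
        add_sub_cancel] using this
    rw [← hsumz.tsum_eq]
    exact key
  · have h1 : HasDerivAt (fun w : ℂ => (w - a) ^ (n + 1))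
        ((n + 1 : ℕ) * (y - a) ^ n * 1) y := by
      simpa using! (((hasDerivAt_id y).sub_const a).pow (n + 1))
    have := h1.const_mul (p.coeff n / (n + 1))
    convert this using 1
    · rfl
    have hn : ((n : ℂ) + 1) ≠ 0 := by exact_mod_cast Nat.succ_ne_zero n
    field_simp
    push_cast
    ring
  · rw [norm_mul, norm_pow]
    have hle : ‖y - a‖ ≤ ρ := by
      rw [← dist_eq_norm]; exact (mem_ball.1 hy).le
    exact mul_le_mul_of_nonneg_left (pow_le_pow_left₀ (norm_nonneg _) hle n) (norm_nonneg _)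
  · apply Summable.congr summable_zero
    intro n
    simp [zero_pow (Nat.succ_ne_zero n)]

lemma exists_holo_re_eq {u : ℂ → ℝ} {a : ℂ} {d : ℝ} (hd : 0 < d)
    (hu : IsHarmonicOn u (Metric.ball a d)) :
    ∃ f : ℂ → ℂ, DifferentiableOn ℂ f (Metric.ball a d) ∧ f a = (u a : ℂ) ∧
      ∀ z ∈ Metric.ball a d, (f z).re = u z := by
  obtain ⟨F, hFa, hF⟩ := exists_primitive hd (grad_holo hu)
  refine ⟨fun z => F z + (u a : ℂ), ?_, by simp [hFa], ?_⟩
  · intro z hz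
    exact ((hF z hz).differentiableAt.add_const _).differentiableWithinAt
  -- show u - Re F is constant on the ball
  have hconst : ∀ z ∈ Metric.ball a d, u z - (F z).re = u a - (F a).re := by
    intro z hz
    have hderiv : ∀ y ∈ Metric.ball a d,
        HasFDerivWithinAt (fun w => u w - (F w).re) (0 : ℂ →L[ℝ] ℝ) (Metric.ball a d) y := by
      intro y hy
      have hC2 := (hu y hy).1
      have hu' : HasFDerivAt u (fderiv ℝ u y) y :=
        (hC2.differentiableAt (by norm_num)).hasFDerivAt
      have hFy := hF y hy
      -- Re ∘ F has the fderiv reCLM ∘ (restrictScalars of smulRight 1 (g y))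
      have hFr : HasFDerivAt (fun w => (F w).re)
          (Complex.reCLM.comp ((ContinuousLinearMap.smulRight (1 : ℂ →L[ℂ] ℂ)
            (((fderiv ℝ u y 1 : ℝ) : ℂ) - ((fderiv ℝ u y I : ℝ) : ℂ) * I)).restrictScalars ℝ)) y :=
        Complex.reCLM.hasFDerivAt.comp y (hFy.hasFDerivAt.restrictScalars ℝ)
      have heq : Complex.reCLM.comp ((ContinuousLinearMap.smulRight (1 : ℂ →L[ℂ] ℂ)
            (((fderiv ℝ u y 1 : ℝ) : ℂ) - ((fderiv ℝ u y I : ℝ) : ℂ) * I)).restrictScalars ℝ)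
          = fderiv ℝ u y := by
        apply ContinuousLinearMap.ext
        intro w
        have hw : w = (w.re : ℝ) • (1 : ℂ) + (w.im : ℝ) • I := by simp [Complex.real_smul]
        have hrhs : fderiv ℝ u y w = w.re • fderiv ℝ u y 1 + w.im • fderiv ℝ u y I := by
          conv_lhs => rw [hw]
          rw [map_add, map_smul, map_smul]
        rw [hrhs]
        simp [Complex.add_re, Complex.mul_re, smul_eq_mul]
      rw [heq] at hFr
      have := hu'.sub hFr
      simpa using! this.hasFDerivWithinAt
    have := (convex_ball a d).norm_image_sub_le_of_norm_hasFDerivWithin_le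
      (C := 0) hderiv (fun y _ => by simp) (mem_ball_self hd) hz
    have h0 : ‖(u z - (F z).re) - (u a - (F a).re)‖ ≤ 0 := by simpa using this
    have := norm_le_zero_iff.1 h0
    linarith [sub_eq_zero.1 this]
  intro z hz
  have := hconst z hz
  rw [hFa] at this
  simp only [Complex.add_re, Complex.ofReal_re, Complex.zero_re] at this ⊢
  linarith

lemma harnack {u : ℂ → ℝ} {a : ℂ} {d : ℝ} (hd : 0 < d)
    (hu : IsHarmonicOn u (Metric.ball a d))
    (hpos : ∀ z ∈ Metric.ball a d, 0 < u z) :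
    ∀ z ∈ Metric.ball a d, u a * (d - dist z a) ≤ u z * (d + dist z a) := by
  obtain ⟨f, hfd, hfa, hfre⟩ := exists_holo_re_eq hd hu
  set c : ℝ := u a with hc
  have hc0 : 0 < c := hpos a (mem_ball_self hd)
  have hden : ∀ w ∈ Metric.ball a d, f w + (c : ℂ) ≠ 0 := by
    intro w hw h0
    have : (f w + (c : ℂ)).re = 0 := by rw [h0]; rfl
    rw [Complex.add_re, Complex.ofReal_re, hfre w hw] at this
    have := hpos w hw
    linarith
  set G : ℂ → ℂ := fun w => (f w - (c : ℂ)) / (f w + (c : ℂ)) with hG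
  have hGd : DifferentiableOn ℂ G (Metric.ball a d) :=
    (hfd.sub_const _).div (hfd.add_const _) hden
  have hGa : G a = 0 := by
    rw [hG]; simp [hfa]
  have esub : ∀ w, ‖f w - (c : ℂ)‖ ^ 2 = ((f w).re - c) ^ 2 + (f w).im ^ 2 := by
    intro w
    rw [Complex.sq_norm, Complex.normSq_apply]
    simp only [Complex.sub_re, Complex.sub_im, Complex.ofReal_re, Complex.ofReal_im]
    ring
  have eadd : ∀ w, ‖f w + (c : ℂ)‖ ^ 2 = ((f w).re + c) ^ 2 + (f w).im ^ 2 := by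
    intro w
    rw [Complex.sq_norm, Complex.normSq_apply]
    simp only [Complex.add_re, Complex.add_im, Complex.ofReal_re, Complex.ofReal_im]
    ring
  have hmaps : MapsTo G (Metric.ball a d) (Metric.ball (G a) 1) := by
    intro w hw
    rw [hGa, mem_ball, dist_zero_right, hG]
    simp only [norm_div]
    have hdenpos : (0:ℝ) < ‖f w + (c : ℂ)‖ := norm_pos_iff.2 (hden w hw)
    rw [div_lt_one hdenpos]
    have h1 : ‖f w - (c : ℂ)‖ ^ 2 < ‖f w + (c : ℂ)‖ ^ 2 := by
      rw [esub, eadd]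
      have hx : 0 < (f w).re := by rw [hfre w hw]; exact hpos w hw
      nlinarith
    exact lt_of_pow_lt_pow_left₀ 2 (norm_nonneg _) h1
  intro z hz
  have hS := Complex.dist_le_div_mul_dist_of_mapsTo_ball hGd (hmaps.mono_right ball_subset_closedBall) hz
  rw [hGa, dist_zero_right, hG] at hS
  set s : ℝ := dist z a with hs
  have hs0 : 0 ≤ s := dist_nonneg
  have hsd : s < d := mem_ball.1 hz
  -- |f z - c| ≤ (s/d) |f z + c|
  have habs : ‖f z - (c : ℂ)‖ ≤ s / d * ‖f z + (c : ℂ)‖ := by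
    have := hS
    simp only [norm_div] at this
    rw [div_le_iff₀ (norm_pos_iff.2 (hden z hz))] at this
    calc ‖f z - (c : ℂ)‖ ≤ 1 / d * s * ‖f z + (c : ℂ)‖ := this
      _ = s / d * ‖f z + (c : ℂ)‖ := by ring_nf
  set x : ℝ := (f z).re with hx
  set y : ℝ := (f z).im with hy
  have hxu : x = u z := hfre z hz
  have hx0 : 0 < x := by rw [hxu]; exact hpos z hz
  have hsq : (x - c) ^ 2 + y ^ 2 ≤ (s / d) ^ 2 * ((x + c) ^ 2 + y ^ 2) := by
    have h2 := mul_self_le_mul_self (norm_nonneg (f z - (c : ℂ))) habs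
    calc (x - c) ^ 2 + y ^ 2 = ‖f z - (c:ℂ)‖ ^ 2 := (esub z).symm
      _ = ‖f z - (c:ℂ)‖ * ‖f z - (c:ℂ)‖ := by ring
      _ ≤ (s / d * ‖f z + (c:ℂ)‖) * (s / d * ‖f z + (c:ℂ)‖) := h2
      _ = (s / d) ^ 2 * ‖f z + (c:ℂ)‖ ^ 2 := by ring
      _ = (s / d) ^ 2 * ((x + c) ^ 2 + y ^ 2) := by rw [eadd]
  have h2' : (d * (x - c)) ^ 2 + (d * y) ^ 2 ≤ s ^ 2 * ((x + c) ^ 2 + y ^ 2) := by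
    have hd' : (0:ℝ) < d ^ 2 := by positivity
    have := mul_le_mul_of_nonneg_left hsq (le_of_lt hd')
    calc (d * (x - c)) ^ 2 + (d * y) ^ 2 = d ^ 2 * ((x - c) ^ 2 + y ^ 2) := by ring
      _ ≤ d ^ 2 * ((s / d) ^ 2 * ((x + c) ^ 2 + y ^ 2)) := this
      _ = s ^ 2 * ((x + c) ^ 2 + y ^ 2) := by field_simp
  have h5 : d * (c - x) ≤ s * (x + c) := by
    have hdd : s ^ 2 ≤ d ^ 2 := by nlinarith
    have hA : (d * (c - x)) ^ 2 ≤ (s * (x + c)) ^ 2 := by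
      nlinarith [mul_nonneg (sub_nonneg.2 hdd) (sq_nonneg y)]
    exact le_of_pow_le_pow_left₀ two_ne_zero (mul_nonneg hs0 (by positivity)) hA
  rw [← hxu]
  linarith [h5]

/-- Harnack-inequality step: if `u` is positive harmonic on `B(a,d)`, extends
continuously to a boundary point `z₁` with `u(z₁) = 0`, and is differentiable at `z₁`
with `|∇u(z₁)| ≤ L`, then `u(a) ≤ 2 d L`. -/
theorem center_value_le_of_boundary_zero
    (u : ℂ → ℝ) (a : ℂ) (d L : ℝ) (hd : 0 < d)
    (hu : IsHarmonicOn u (Metric.ball a d))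
    (hpos : ∀ z ∈ Metric.ball a d, 0 < u z)
    (z₁ : ℂ) (hz₁ : z₁ ∈ Metric.sphere a d)
    (hcont : ContinuousWithinAt u (Metric.closedBall a d) z₁)
    (hz₁0 : u z₁ = 0)
    (hdiff : DifferentiableAt ℝ u z₁) (hL : ‖fderiv ℝ u z₁‖ ≤ L) :
    u a ≤ 2 * d * L := by
  have hdist : dist z₁ a = d := mem_sphere.1 hz₁
  set c : ℝ := u a with hc
  have hc0 : 0 < c := hpos a (mem_ball_self hd)
  set D : ℝ := fderiv ℝ u z₁ (z₁ - a) with hD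
  -- the path γ r = a + r (z₁ - a)
  have hγ : HasDerivAt (fun r : ℝ => a + (r : ℂ) * (z₁ - a)) (z₁ - a) 1 := by
    have h1 : HasDerivAt (fun r : ℝ => ((r : ℝ) : ℂ)) 1 1 := by
      simpa using (hasDerivAt_id (1 : ℝ)).ofReal_comp
    simpa using (h1.mul_const (z₁ - a)).const_add a
  have hγ1 : a + ((1 : ℝ) : ℂ) * (z₁ - a) = z₁ := by push_cast; ring
  have hψ : HasDerivAt (fun r : ℝ => u (a + (r : ℂ) * (z₁ - a))) D 1 := by
    have hfd : HasFDerivAt u (fderiv ℝ u z₁) (a + ((1 : ℝ) : ℂ) * (z₁ - a)) := by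
      rw [hγ1]; exact hdiff.hasFDerivAt
    exact hfd.comp_hasDerivAt 1 hγ
  set ψ : ℝ → ℝ := fun r => u (a + (r : ℂ) * (z₁ - a)) with hψdef
  have hψ1 : ψ 1 = 0 := by rw [hψdef]; simp only [hγ1]; exact hz₁0
  -- points on the segment
  have hmem : ∀ r : ℝ, r ∈ Ioo (0 : ℝ) 1 → (a + (r : ℂ) * (z₁ - a)) ∈ Metric.ball a d := by
    intro r hr
    rw [mem_ball, dist_eq_norm]
    have : a + (r : ℂ) * (z₁ - a) - a = (r : ℂ) * (z₁ - a) := by ring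
    rw [this, norm_mul, Complex.norm_real, Real.norm_eq_abs, abs_of_pos hr.1]
    have hnorm : ‖z₁ - a‖ = d := by rw [← dist_eq_norm, hdist]
    rw [hnorm]
    nlinarith [hr.2]
  have hdist' : ∀ r : ℝ, r ∈ Ioo (0 : ℝ) 1 → dist (a + (r : ℂ) * (z₁ - a)) a = r * d := by
    intro r hr
    rw [dist_eq_norm]
    have : a + (r : ℂ) * (z₁ - a) - a = (r : ℂ) * (z₁ - a) := by ring
    rw [this, norm_mul, Complex.norm_real, Real.norm_eq_abs, abs_of_pos hr.1,
      ← dist_eq_norm, hdist]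
  -- slope bound
  have hslope : ∀ r : ℝ, r ∈ Ioo (0 : ℝ) 1 → slope ψ 1 r ≤ -c / (1 + r) := by
    intro r hr
    have hball := hmem r hr
    have hHar := harnack hd hu hpos _ hball
    rw [hdist' r hr] at hHar
    -- c * (d - r d) ≤ ψ r * (d + r d)
    have hψr : c * (1 - r) / (1 + r) ≤ ψ r := by
      rw [hψdef]
      have h1r : (0:ℝ) < 1 + r := by linarith [hr.1]
      rw [div_le_iff₀ h1r]
      have : c * (d - r * d) ≤ u (a + (r : ℂ) * (z₁ - a)) * (d + r * d) := hHar
      nlinarith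
    rw [slope_def_field, hψ1]
    have hr1 : r - 1 < 0 := by linarith [hr.2]
    rw [sub_zero, div_le_iff_of_neg hr1]
    calc -c / (1 + r) * (r - 1) = c * (1 - r) / (1 + r) := by ring
      _ ≤ ψ r := hψr
  -- pass to the limit
  have hne : Ioo (0 : ℝ) 1 ⊆ {(1 : ℝ)}ᶜ := fun x hx => ne_of_lt hx.2
  have hNeBot : (nhdsWithin (1 : ℝ) (Ioo (0 : ℝ) 1)).NeBot := by
    refine mem_closure_iff_nhdsWithin_neBot.1 ?_
    rw [closure_Ioo (by norm_num : (0:ℝ) ≠ 1)]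
    exact ⟨by norm_num, le_rfl⟩
  have hT1 : Tendsto (slope ψ 1) (nhdsWithin (1 : ℝ) (Ioo (0 : ℝ) 1)) (nhds D) :=
    (hasDerivAt_iff_tendsto_slope.1 hψ).mono_left (nhdsWithin_mono _ hne)
  have hT2 : Tendsto (fun r : ℝ => -c / (1 + r)) (nhdsWithin (1 : ℝ) (Ioo (0 : ℝ) 1))
      (nhds (-c / 2)) := by
    have hcont2 : ContinuousAt (fun r : ℝ => -c / (1 + r)) 1 :=
      ContinuousAt.div continuousAt_const (by fun_prop) (by norm_num)
    have := hcont2.tendsto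
    norm_num at this
    exact ((by norm_num : -c / (1 + (1:ℝ)) = -c / 2) ▸ hcont2.tendsto).mono_left
      nhdsWithin_le_nhds
  have hDle : D ≤ -c / 2 := by
    refine le_of_tendsto_of_tendsto hT1 hT2 ?_
    filter_upwards [self_mem_nhdsWithin] with r hr
    exact hslope r hr
  -- conclude
  have hnormD : |D| ≤ ‖fderiv ℝ u z₁‖ * d := by
    have := (fderiv ℝ u z₁).le_opNorm (z₁ - a)
    rw [show ‖z₁ - a‖ = d from by rw [← dist_eq_norm, hdist]] at this
    exact this
  have h1 : -D ≤ L * d := le_trans (neg_le_abs D) (le_trans hnormD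
    (mul_le_mul_of_nonneg_right hL hd.le))
  linarith
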